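/- Let k be a field, let m, p ≥ 1 and n = m + p, and assume (n−1)! ≠ 0 in k. Let f : Fin m → Polynomial k be linearly independent over k with each f i of degree < n, and let s ∈ k. Then the Wronskian Wr(f) evaluated at s is zero if and only if the k-span of {f 0, …, f (m−1)} intersects E_p(s) nontrivially, i.e. span{f i} ⊓ E_p(s) ≠ ⊥. -/

import Mathlib

open Polynomial Matrix

/-- The Wronskian of a family `f : Fin m → Polynomial k`. -/
noncomputable def Wr {k : Type*} [Field k] {m : ℕ} (f : Fin m → Polynomial k) : Polynomial k :=
  Matrix.det (Matrix.of fun i j : Fin m => Polynomial.derivative^[(i : ℕ)] (f j))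

/-- The plane `E_p(s)`: the span of `(X - C s)^j` for `m ≤ j ≤ m + p - 1`. -/
noncomputable def Eplane {k : Type*} [Field k] (m p : ℕ) (s : k) : Submodule k (Polynomial k) :=
  Submodule.span k
    ((fun j : ℕ => (Polynomial.X - Polynomial.C s) ^ j) '' {j | m ≤ j ∧ j ≤ m + p - 1})

lemma eval_iterate_derivative_taylor {k : Type*} [Field k] (g : Polynomial k) (s : k) (i : ℕ) :
    eval s (derivative^[i] g) = (Nat.factorial i : k) * (taylor s g).coeff i := by
  have h := congrFun (Polynomial.factorial_smul_hasseDeriv (R := k) i) g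
  rw [← h]
  simp [taylor_coeff, mul_comm]

lemma fac_cast_ne_zero {k : Type*} [Field k] {a b : ℕ} (h : a ≤ b)
    (hb : ((Nat.factorial b : k)) ≠ 0) : ((Nat.factorial a : k)) ≠ 0 := by
  obtain ⟨c, hc⟩ := Nat.factorial_dvd_factorial h
  intro h0
  apply hb
  rw [hc]
  push_cast
  rw [h0, zero_mul]

lemma mem_Eplane_iff {k : Type*} [Field k] {m p n : ℕ} (hm : 1 ≤ m) (hp : 1 ≤ p)
    (hn : n = m + p) (hfac : ((Nat.factorial (n - 1) : k) ≠ 0)) (s : k)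
    (g : Polynomial k) (hg : g.degree < n) :
    g ∈ Eplane m p s ↔ ∀ i < m, eval s (derivative^[i] g) = 0 := by
  constructor
  · intro hmem i hi
    clear hg
    induction hmem using Submodule.span_induction with
    | mem x hx =>
      obtain ⟨j, ⟨hj1, hj2⟩, rfl⟩ := hx
      rw [Polynomial.iterate_derivative_X_sub_pow]
      have : 1 ≤ j - i := by omega
      simp [eval_smul, zero_pow (by omega : j - i ≠ 0)]
    | zero => simp
    | add x y _ _ hx hy => simp [hx, hy]
    | smul a x _ hx => simp [hx]
  · intro H
    by_cases hg0 : g = 0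
    · simp [hg0]
    have hnd : g.natDegree < n := (Polynomial.natDegree_lt_iff_degree_lt hg0).2 hg
    have hcoeff : ∀ i < m, (taylor s g).coeff i = 0 := by
      intro i hi
      have h1 := eval_iterate_derivative_taylor g s i
      rw [H i hi] at h1
      have hfi : ((Nat.factorial i : k)) ≠ 0 :=
        fac_cast_ne_zero (by omega : i ≤ n - 1) hfac
      field_simp at h1
      exact (mul_eq_zero.1 h1.symm).resolve_left hfi
    rw [← Polynomial.sum_taylor_eq g s]
    apply Submodule.sum_mem
    intro j hj
    rw [Polynomial.mem_support_iff] at hj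
    have hjm : m ≤ j := by
      by_contra hc
      exact hj (hcoeff j (by omega))
    have hjn : j < n := by
      by_contra hc
      exact hj (Polynomial.coeff_eq_zero_of_natDegree_lt
        (by rw [Polynomial.natDegree_taylor]; omega))
    show C (((taylor s) g).coeff j) * (X - C s) ^ j ∈ Eplane m p s
    rw [← smul_eq_C_mul]
    exact Submodule.smul_mem _ _ (Submodule.subset_span ⟨j, ⟨hjm, by omega⟩, rfl⟩)

theorem wronskian_eval_zero_iff_meets_Eplane {k : Type*} [Field k] (m p n : ℕ)
    (hm : 1 ≤ m) (hp : 1 ≤ p) (hn : n = m + p)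
    (hfac : ((Nat.factorial (n - 1) : k) ≠ 0))
    (f : Fin m → Polynomial k) (hli : LinearIndependent k f)
    (hf : ∀ i, (f i).degree < n) (s : k) :
    Polynomial.eval s (Wr f) = 0 ↔
      Submodule.span k (Set.range f) ⊓ Eplane m p s ≠ ⊥ := by
  classical
  set M : Matrix (Fin m) (Fin m) k :=
    Matrix.of (fun i j : Fin m => eval s (derivative^[(i : ℕ)] (f j))) with hM
  have hdet : eval s (Wr f) = M.det := by
    rw [Wr, ← Polynomial.coe_evalRingHom, RingHom.map_det]
    congr 1
  have hdeg : ∀ c : Fin m → k, (∑ j, c j • f j).degree < (n : WithBot ℕ) := by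
    intro c
    refine lt_of_le_of_lt (Polynomial.degree_sum_le _ _) ?_
    rw [Finset.sup_lt_iff (by exact_mod_cast WithBot.bot_lt_coe n)]
    intro j _
    exact lt_of_le_of_lt (Polynomial.degree_smul_le _ _) (hf j)
  have hder : ∀ (c : Fin m → k) (i : ℕ),
      eval s (derivative^[i] (∑ j, c j • f j)) = ∑ j, c j * eval s (derivative^[i] (f j)) := by
    intro c i
    rw [Polynomial.iterate_derivative_sum]
    simp [Polynomial.iterate_derivative_smul, Polynomial.eval_finset_sum]
  have key : ∀ c : Fin m → k, (M *ᵥ c = 0 ↔ (∑ j, c j • f j) ∈ Eplane m p s) := by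
    intro c
    rw [mem_Eplane_iff hm hp hn hfac s _ (hdeg c), funext_iff]
    constructor
    · intro h i hi
      rw [hder]
      have := h ⟨i, hi⟩
      simpa [Matrix.mulVec, dotProduct, hM, mul_comm] using this
    · intro h i
      have := h (i : ℕ) i.2
      rw [hder] at this
      simpa [Matrix.mulVec, dotProduct, hM, mul_comm] using this
  rw [hdet, ← Matrix.exists_mulVec_eq_zero_iff, Submodule.ne_bot_iff]
  constructor
  · rintro ⟨v, hv0, hv⟩
    refine ⟨∑ j, v j • f j, Submodule.mem_inf.2 ⟨?_, (key v).1 hv⟩, ?_⟩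
    · exact Submodule.sum_mem _ fun j _ =>
        Submodule.smul_mem _ _ (Submodule.subset_span (Set.mem_range_self j))
    · intro h0
      apply hv0
      funext j
      exact Fintype.linearIndependent_iff.1 hli v h0 j
  · rintro ⟨g, hg, hg0⟩
    obtain ⟨hg1, hg2⟩ := Submodule.mem_inf.1 hg
    obtain ⟨c, hc⟩ := (Submodule.mem_span_range_iff_exists_fun k).1 hg1
    refine ⟨c, ?_, ?_⟩
    · intro h0
      apply hg0
      rw [← hc, h0]
      simp
    · rw [key c, hc]
      exact hg2
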